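/- Theorem 2: Let h(x) be a monic irreducible polynomial over GF(q) of degree m > 1 and order n with n ≠ q^m − 1 and gcd(n, q) = 1, and let J ⊆ A_n be the minimal ideal (irreducible cyclic code) with parity-check polynomial h(x). Set d = gcd(q − 1, n) and r = n/d. Then every cycle of a nonzero element of J meets exactly r distinct proportionality classes, each of which contains exactly d elements of the cycle; moreover r divides R, where R = (q^m − 1)/(q − 1) is the number of nonzero proportionality classes of J. -/

import Mathlib

open Polynomial

namespace CyclicCode

open scoped Classical

variable (F : Type) [Field F] [Fintype F]

/-- The ambient algebra `A_n = GF(q)[x]/(x^n - 1)`. -/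
abbrev An (n : ℕ) := AdjoinRoot (X ^ n - 1 : F[X])

/-- The image of `x` in `A_n`. -/
noncomputable def xbar (n : ℕ) : An F n := AdjoinRoot.root _

variable {F}

/-- The proportionality class `P_z = {α • z : α ∈ GF(q)^*}` of `z`. -/
def propClass {n : ℕ} (z : An F n) : Set (An F n) :=
  {w | ∃ α : F, α ≠ 0 ∧ w = α • z}

/-- The cycle `{x^j • z : j}` of `z`. -/
noncomputable def cyc {n : ℕ} (z : An F n) : Set (An F n) :=
  {w | ∃ j : ℕ, w = xbar F n ^ j * z}

/-- The period of `z`: the least positive `e` with `x^e * z = z`. -/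
noncomputable def period {n : ℕ} (z : An F n) : ℕ :=
  sInf {e : ℕ | 0 < e ∧ xbar F n ^ e * z = z}

/-- The order of a polynomial `f`: the least positive `e` with `f ∣ X^e - 1`. -/
noncomputable def polyOrder {F : Type} [Field F] (f : F[X]) : ℕ :=
  sInf {e : ℕ | 0 < e ∧ f ∣ X ^ e - 1}

/-- The representative of degree `< n` of an element of `A_n`. -/
noncomputable def rep {n : ℕ} (z : An F n) : F[X] :=
  if h : (X ^ n - 1 : F[X]).Monic then AdjoinRoot.modByMonicHom h z else 0

/-- The Hamming weight of an element of `A_n`. -/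
noncomputable def wt {n : ℕ} (z : An F n) : ℕ := (rep z).support.card

/-- `c` is the minimal polynomial of `z ∈ A_n`: a polynomial annihilates `z`
iff it is a multiple of `c`. -/
def HasMinPoly {n : ℕ} (z : An F n) (c : F[X]) : Prop :=
  ∀ f : F[X], AdjoinRoot.mk (X ^ n - 1 : F[X]) f * z = 0 ↔ c ∣ f

/-- The cyclic code of length `n` with parity-check polynomial `h`:
the ideal of `A_n` generated by `(X^n - 1)/h`. -/
noncomputable def code (F : Type) [Field F] (n : ℕ) (h : F[X]) : Ideal (An F n) :=
  Ideal.span {AdjoinRoot.mk (X ^ n - 1 : F[X]) ((X ^ n - 1) / h)}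

/-- The proportionality classes meeting a set `C`. -/
def classesOf {n : ℕ} (C : Set (An F n)) : Set (Set (An F n)) :=
  {P | ∃ z ∈ C, P = propClass z}

/-- The cycles meeting a set `C`. -/
noncomputable def cyclesOf {n : ℕ} (C : Set (An F n)) : Set (Set (An F n)) :=
  {S | ∃ z ∈ C, S = cyc z}

/-- The minimum Hamming distance of a linear code `J ⊆ A_n`. -/
noncomputable def minDist {n : ℕ} (J : Ideal (An F n)) : ℕ :=
  sInf {k : ℕ | ∃ z ∈ J, z ≠ 0 ∧ wt z = k}

/-- The multiplicative order of `q` modulo `n`. -/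
noncomputable def multOrder (q n : ℕ) : ℕ :=
  sInf {e : ℕ | 0 < e ∧ q ^ e ≡ 1 [MOD n]}



/-- Every `(q-1)`-th root of unity in a field extension of `F` (with `|F| = q`)
comes from a nonzero element of `F`. -/
lemma aux_mem_range {F K : Type} [Field F] [Fintype F] [Field K] (ι : F →+* K) {q : ℕ}
    (hcard : Fintype.card F = q) (hq : 1 < q) {γ : K} (hγ : γ ^ (q - 1) = 1) :
    ∃ α : F, α ≠ 0 ∧ ι α = γ := by
  classical
  set P : K[X] := X ^ (q - 1) - C 1 with hP
  have hP0 : P ≠ 0 := by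
    have : P.natDegree = q - 1 := natDegree_X_pow_sub_C
    intro h0
    rw [h0, natDegree_zero] at this
    omega
  have hroot : ∀ t : K, t ^ (q - 1) = 1 → t ∈ P.roots.toFinset := by
    intro t ht
    rw [Multiset.mem_toFinset, mem_roots hP0]
    simp [hP, IsRoot, ht]
  set T : Finset K := (Finset.univ.filter (fun α : F => α ≠ 0)).image ι with hT
  have hTcard : T.card = q - 1 := by
    rw [hT, Finset.card_image_of_injective _ ι.injective]
    have : (Finset.univ.filter (fun α : F => α ≠ 0)) = Finset.univ \ {0} := by
      ext a; simp
    rw [this, Finset.card_sdiff_of_subset (by simp), Finset.card_univ, hcard, Finset.card_singleton]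
  have hTsub : T ⊆ P.roots.toFinset := by
    intro t ht
    rw [hT, Finset.mem_image] at ht
    obtain ⟨α, hα, rfl⟩ := ht
    simp only [Finset.mem_filter] at hα
    apply hroot
    rw [← map_pow, ← hcard, FiniteField.pow_card_sub_one_eq_one α hα.2, map_one]
  have hrootcard : P.roots.toFinset.card ≤ q - 1 := by
    calc P.roots.toFinset.card ≤ Multiset.card P.roots := P.roots.toFinset_card_le
    _ ≤ P.natDegree := P.card_roots'
    _ = q - 1 := natDegree_X_pow_sub_C
  by_contra hcon
  push_neg at hcon
  have hγT : γ ∉ T := by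
    intro hmem
    rw [hT, Finset.mem_image] at hmem
    obtain ⟨α, hα, hαγ⟩ := hmem
    simp only [Finset.mem_filter] at hα
    exact hcon α hα.2 hαγ
  have : (insert γ T).card ≤ q - 1 := le_trans (Finset.card_le_card (by
    intro t ht
    rcases Finset.mem_insert.mp ht with rfl | ht
    · exact hroot _ hγ
    · exact hTsub ht)) hrootcard
  rw [Finset.card_insert_of_notMem hγT, hTcard] at this
  omega


lemma aux_dvd_iff {q n d r : ℕ} (hn : 0 < n) (hq : 1 < q) (hd : d = Nat.gcd (q-1) n)
    (hr : r = n / d) (k : ℕ) : n ∣ k * (q - 1) ↔ r ∣ k := by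
  have hq0 : 0 < q - 1 := by omega
  have hd0 : 0 < d := hd ▸ Nat.gcd_pos_of_pos_left n hq0
  have hdn : d ∣ n := hd ▸ Nat.gcd_dvd_right _ _
  have hdq : d ∣ q - 1 := hd ▸ Nat.gcd_dvd_left _ _
  have hco : Nat.Coprime ((q-1)/d) r := by
    rw [hr, hd]; exact Nat.coprime_div_gcd_div_gcd (hd ▸ hd0)
  have h1 : n = d * r := by rw [hr, Nat.mul_div_cancel' hdn]
  have h2 : q - 1 = d * ((q-1)/d) := (Nat.mul_div_cancel' hdq).symm
  rw [h1]
  constructor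
  · intro h
    have : d * r ∣ d * (k * ((q-1)/d)) := by
      rw [show d * (k * ((q-1)/d)) = k * (d * ((q-1)/d)) by ring, ← h2]; exact h
    have := (Nat.mul_dvd_mul_iff_left hd0).mp this
    exact (Nat.Coprime.dvd_of_dvd_mul_right (hco.symm) this)
  · rintro ⟨t, rfl⟩
    rw [h2]
    exact ⟨t * ((q-1)/d), by ring⟩

lemma aux_mod (s n j k : ℕ) (hn : 0 < n) (hs : s ∣ n) :
    s ∣ j + k * (n - 1) ↔ j ≡ k [MOD s] := by
  have h1 : j + k * (n - 1) + k = j + k * n := by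
    have : n - 1 + 1 = n := Nat.sub_add_cancel hn
    rw [add_assoc, ← Nat.mul_succ, Nat.succ_eq_add_one, this]
  have h2 : j + k * n ≡ j + 0 [MOD s] :=
    Nat.ModEq.add_left j (Nat.modEq_zero_iff_dvd.mpr (Dvd.dvd.mul_left hs k))
  rw [add_zero] at h2
  constructor
  · intro h
    have h3 : j + k * (n - 1) + k ≡ 0 + k [MOD s] :=
      Nat.ModEq.add_right k (Nat.modEq_zero_iff_dvd.mpr h)
    rw [h1, zero_add] at h3
    exact (h2.symm.trans h3)
  · intro h
    have h3 : j + k * (n - 1) + k ≡ 0 + k [MOD s] := by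
      rw [h1, zero_add]; exact h2.trans h
    exact Nat.modEq_zero_iff_dvd.mp (Nat.ModEq.add_right_cancel' k h3)


/-- Theorem 2: for an irreducible cyclic code `J ⊆ A_n` whose
monic irreducible parity-check polynomial has degree `m > 1` and order `n ≠ q^m - 1`,
with `d = gcd(q - 1, n)` and `r = n / d`, every cycle of a nonzero element of `J`
meets exactly `r` distinct proportionality classes, each containing exactly `d`
elements of the cycle; moreover `r` divides `R = (q^m - 1)/(q - 1)`. -/
theorem stmt6 {F : Type} [Field F] [Fintype F] (q n m : ℕ)
    (hcard : Fintype.card F = q) (hq : 2 < q) (hm : 1 < m)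
    (h : F[X]) (hmon : h.Monic) (hirr : Irreducible h) (hdeg : h.natDegree = m)
    (hord : polyOrder h = n) (hnp : n ≠ q ^ m - 1) (hco : Nat.Coprime n q)
    (d r R : ℕ) (hd : d = Nat.gcd (q - 1) n) (hrdef : r = n / d)
    (hR : R = (q ^ m - 1) / (q - 1)) :
    (∀ z : An F n, z ∈ code F n h → z ≠ 0 →
      Set.ncard (classesOf (cyc z)) = r ∧
      ∀ w ∈ cyc z, (propClass w ∩ cyc z).ncard = d) ∧
    r ∣ R := by
  have hn0 : 0 < n := by
    rcases Nat.eq_zero_or_pos n with rfl | hn0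
    · rw [Nat.coprime_zero_left] at hco; omega
    · exact hn0
  haveI : Fact (Irreducible h) := ⟨hirr⟩
  set K := AdjoinRoot h with hK
  set β : K := AdjoinRoot.root h with hβ
  -- divisibility ↔ root power
  have hdvd_iff : ∀ e : ℕ, h ∣ (X ^ e - 1 : F[X]) ↔ β ^ e = 1 := by
    intro e
    rw [← AdjoinRoot.mk_eq_zero, map_sub, map_pow, AdjoinRoot.mk_X, map_one, sub_eq_zero]
  have hSne : {e : ℕ | 0 < e ∧ h ∣ X ^ e - 1}.Nonempty := by
    by_contra hcon
    rw [Set.not_nonempty_iff_eq_empty] at hcon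
    rw [polyOrder, hcon, Nat.sInf_empty] at hord
    omega
  have hnS : n ∈ {e : ℕ | 0 < e ∧ h ∣ X ^ e - 1} := by
    have := Nat.sInf_mem hSne
    rwa [show sInf {e : ℕ | 0 < e ∧ h ∣ X ^ e - 1} = n from hord] at this
  have hβn : β ^ n = 1 := (hdvd_iff n).mp hnS.2
  have hβfin : IsOfFinOrder β := isOfFinOrder_iff_pow_eq_one.mpr ⟨n, hn0, hβn⟩
  have horderβ : orderOf β = n := by
    have h1 : orderOf β ≤ n := Nat.le_of_dvd hn0 (orderOf_dvd_of_pow_eq_one hβn)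
    have h2 : n ≤ orderOf β := by
      rw [← hord, polyOrder]
      exact Nat.sInf_le ⟨hβfin.orderOf_pos, (hdvd_iff _).mpr (pow_orderOf_eq_one β)⟩
    omega
  have horder : ∀ e : ℕ, β ^ e = 1 ↔ n ∣ e := by
    intro e; rw [← horderβ, orderOf_dvd_iff_pow_eq_one]
  have hβunit : IsUnit β := by
    apply IsUnit.of_mul_eq_one (β ^ (n - 1))
    calc β * β ^ (n - 1) = β ^ (1 + (n - 1)) := by rw [pow_add, pow_one]
    _ = β ^ n := by congr 1; omega
    _ = 1 := hβn
  -- factorization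
  have hhdvd : h ∣ (X ^ n - 1 : F[X]) := (hdvd_iff n).mpr hβn
  set g₀ : F[X] := (X ^ n - 1) / h with hg₀
  have hfac : h * g₀ = X ^ n - 1 := EuclideanDomain.mul_div_cancel' hmon.ne_zero hhdvd
  have hXn_ne : (X ^ n - 1 : F[X]) ≠ 0 := by
    intro he
    have := congrArg (eval 0) he
    simp [zero_pow hn0.ne'] at this
  have hg₀ne : g₀ ≠ 0 := by
    intro he; rw [he, mul_zero] at hfac; exact hXn_ne hfac.symm
  -- squarefree
  have hnF : (n : F) ≠ 0 := by
    intro hnf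
    have hp := ringChar.dvd hnf
    obtain ⟨k, hprime, hcard2⟩ := FiniteField.card F (ringChar F)
    have hpq : (ringChar F : ℕ) ∣ q := by
      rw [← hcard, hcard2]; exact dvd_pow_self _ (by exact_mod_cast k.ne_zero)
    have hdg := Nat.dvd_gcd hp hpq
    rw [hco.gcd_eq_one] at hdg
    have h1 := Nat.dvd_one.mp hdg
    have := hprime.one_lt
    omega
  have hsf : Squarefree (X ^ n - 1 : F[X]) := by
    have := (separable_X_pow_sub_C (1 : F) hnF one_ne_zero).squarefree
    rwa [map_one] at this
  have hndvd : ¬ h ∣ g₀ := by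
    intro hdv
    obtain ⟨t, ht⟩ := hdv
    exact hirr.not_isUnit (hsf h ⟨t, by rw [← hfac, ht]; ring⟩)
  -- arithmetic facts about d and r
  have hd0 : 0 < d := hd ▸ Nat.gcd_pos_of_pos_left n (by omega)
  have hdn : d ∣ n := hd ▸ Nat.gcd_dvd_right _ _
  have hrn : r ∣ n := hrdef ▸ Nat.div_dvd_of_dvd hdn
  have hr0 : 0 < r := hrdef ▸ Nat.div_pos (Nat.le_of_dvd hn0 hdn) hd0
  have hnrd : r * d = n := by rw [hrdef, Nat.div_mul_cancel hdn]
  -- xbar facts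
  set u : An F n := xbar F n with hu
  have hun : u ^ n = 1 := by
    have h1 : (AdjoinRoot.mk (X ^ n - 1 : F[X])) (X ^ n - 1) = 0 := AdjoinRoot.mk_self
    rw [map_sub, map_pow, AdjoinRoot.mk_X, map_one, sub_eq_zero] at h1
    exact h1
  have huunit : IsUnit u := by
    apply IsUnit.of_mul_eq_one (u ^ (n - 1))
    calc u * u ^ (n - 1) = u ^ (1 + (n - 1)) := by rw [pow_add, pow_one]
    _ = u ^ n := by congr 1; omega
    _ = 1 := hun
  have hukn : ∀ k : ℕ, u ^ (k * n) = 1 := by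
    intro k; rw [mul_comm, pow_mul, hun, one_pow]
  have hpowmul : ∀ (a b : ℕ) (w : An F n), u ^ (a + b) * w = u ^ a * (u ^ b * w) := by
    intro a b w; rw [pow_add, mul_assoc]
  have hcancel : ∀ (a : ℕ) (w w' : An F n), u ^ a * w = u ^ a * w' → w = w' := by
    intro a w w' hww
    exact (huunit.pow a).mul_left_cancel hww
  have hsmul : ∀ (α : F) (w : An F n), α • w = AdjoinRoot.mk (X ^ n - 1 : F[X]) (C α) * w := by
    intro α w
    rw [Algebra.smul_def, AdjoinRoot.algebraMap_eq]
    rfl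
  constructor
  · -- per-z statement
    intro z hz hz0
    rw [code, Ideal.mem_span_singleton] at hz
    obtain ⟨v, hv⟩ := hz
    obtain ⟨u', rfl⟩ := AdjoinRoot.mk_surjective v
    have hz' : z = AdjoinRoot.mk (X ^ n - 1 : F[X]) (g₀ * u') := by
      rw [← map_mul, ← hg₀] at hv; exact hv
    have hu'h : ¬ h ∣ u' := by
      rintro ⟨t, ht⟩
      apply hz0
      rw [hz', AdjoinRoot.mk_eq_zero]
      exact ⟨t, by rw [← hfac, ht]; ring⟩
    have hann : ∀ f : F[X], AdjoinRoot.mk (X ^ n - 1 : F[X]) f * z = 0 ↔ h ∣ f := by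
      intro f
      rw [hz', ← map_mul, AdjoinRoot.mk_eq_zero, ← hfac]
      constructor
      · intro hdv
        have h1 : g₀ * h ∣ g₀ * (f * u') := by
          rw [show g₀ * (f * u') = f * (g₀ * u') by ring, show g₀ * h = h * g₀ by ring]
          exact hdv
        have h2 : h ∣ f * u' := (mul_dvd_mul_iff_left hg₀ne).mp h1
        rcases (hirr.prime.2.2 f u' h2) with h3 | h3
        · exact h3
        · exact absurd h3 hu'h
      · rintro ⟨t, rfl⟩
        exact ⟨t * u', by ring⟩
    -- powers of x acting on z
    have hone : ∀ j : ℕ, u ^ j * z = z ↔ n ∣ j := by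
      intro j
      have h1 : u ^ j * z - z = AdjoinRoot.mk (X ^ n - 1 : F[X]) (X ^ j - 1) * z := by
        rw [map_sub, map_pow, AdjoinRoot.mk_X, map_one, sub_mul, one_mul]; rfl
      rw [← sub_eq_zero, h1, hann, hdvd_iff, horder]
    have heq2 : ∀ (j : ℕ) (α : F), u ^ j * z = α • z ↔ β ^ j = algebraMap F K α := by
      intro j α
      have h1 : u ^ j * z - α • z = AdjoinRoot.mk (X ^ n - 1 : F[X]) (X ^ j - C α) * z := by
        rw [map_sub, map_pow, AdjoinRoot.mk_X, sub_mul, hsmul]; rfl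
      rw [← sub_eq_zero, h1, hann, ← AdjoinRoot.mk_eq_zero, map_sub, map_pow, AdjoinRoot.mk_X,
        sub_eq_zero, AdjoinRoot.mk_C, ← AdjoinRoot.algebraMap_eq]
    have hshift : ∀ (c j : ℕ) (w : An F n), u ^ j * z = w ↔ u ^ (j + c) * z = u ^ c * w := by
      intro c j w
      constructor
      · intro hjw; rw [add_comm, hpowmul, hjw]
      · intro hcw
        apply hcancel c
        rw [← hpowmul, add_comm, hcw]
    have hcn : ∀ k : ℕ, k * (n - 1) + k = k * n := by
      intro k
      have h1 : n - 1 + 1 = n := Nat.sub_add_cancel hn0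
      rw [← Nat.mul_succ, Nat.succ_eq_add_one, h1]
    have hperiod : ∀ a b : ℕ, u ^ a * z = u ^ b * z ↔ a ≡ b [MOD n] := by
      intro a b
      rw [hshift (b * (n - 1)) a (u ^ b * z)]
      have h1 : u ^ (b * (n - 1)) * (u ^ b * z) = z := by
        rw [← hpowmul, hcn, hukn, one_mul]
      rw [h1, hone]
      exact aux_mod n n a b hn0 dvd_rfl
    have hRel : ∀ j k : ℕ, (∃ α : F, α ≠ 0 ∧ u ^ j * z = α • (u ^ k * z)) ↔ j ≡ k [MOD r] := by
      intro j k
      have hstep : ∀ α : F, u ^ j * z = α • (u ^ k * z) ↔ u ^ (j + k * (n - 1)) * z = α • z := by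
        intro α
        rw [hshift (k * (n - 1)) j, mul_smul_comm, ← hpowmul, hcn, hukn, one_mul]
      constructor
      · rintro ⟨α, hα0, hα⟩
        rw [hstep, heq2] at hα
        have h1 : (β ^ (j + k * (n - 1))) ^ (q - 1) = 1 := by
          rw [hα, ← map_pow, ← hcard, FiniteField.pow_card_sub_one_eq_one α hα0, map_one]
        rw [← pow_mul, horder] at h1
        exact (aux_mod r n j k hn0 hrn).mp ((aux_dvd_iff hn0 (by omega) hd hrdef _).mp h1)
      · intro hjk
        have hdvd : r ∣ j + k * (n - 1) := (aux_mod r n j k hn0 hrn).mpr hjk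
        have h1 : n ∣ (j + k * (n - 1)) * (q - 1) :=
          (aux_dvd_iff hn0 (by omega) hd hrdef _).mpr hdvd
        have hpow : (β ^ (j + k * (n - 1))) ^ (q - 1) = 1 := by
          rw [← pow_mul, horder]; exact h1
        obtain ⟨α, hα0, hαeq⟩ := aux_mem_range (algebraMap F K) hcard (by omega) hpow
        exact ⟨α, hα0, (hstep α).mpr ((heq2 _ α).mpr hαeq.symm)⟩
    have hRelmem : ∀ j k : ℕ, j ≡ k [MOD r] → u ^ j * z ∈ propClass (u ^ k * z) := by
      intro j k hjk
      obtain ⟨α, hα0, hα⟩ := (hRel j k).mpr hjk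
      exact ⟨α, hα0, hα⟩
    have hclass_eq : ∀ j k : ℕ, j ≡ k [MOD r] →
        propClass (u ^ j * z) = propClass (u ^ k * z) := by
      intro j k hjk
      obtain ⟨α, hα0, hα⟩ := (hRel j k).mpr hjk
      ext w
      constructor
      · rintro ⟨γ, hγ0, rfl⟩
        exact ⟨γ * α, mul_ne_zero hγ0 hα0, by rw [hα, smul_smul]⟩
      · rintro ⟨γ, hγ0, rfl⟩
        refine ⟨γ * α⁻¹, mul_ne_zero hγ0 (inv_ne_zero hα0), ?_⟩
        rw [hα, smul_smul, mul_assoc, inv_mul_cancel₀ hα0, mul_one]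
    have hclass_rel : ∀ j k : ℕ, propClass (u ^ j * z) = propClass (u ^ k * z) →
        j ≡ k [MOD r] := by
      intro j k hpc
      apply (hRel j k).mp
      have hmem : u ^ j * z ∈ propClass (u ^ k * z) := by
        rw [← hpc]; exact ⟨1, one_ne_zero, (one_smul F _).symm⟩
      exact hmem
    constructor
    · -- number of classes = r
      have hinj : Function.Injective (fun t : Fin r => propClass (u ^ (t : ℕ) * z)) := by
        intro t t' htt
        simp only at htt
        have h1 := hclass_rel _ _ htt
        exact Fin.ext (by rw [← Nat.mod_eq_of_lt t.isLt, ← Nat.mod_eq_of_lt t'.isLt]; exact h1)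
      have himg : classesOf (cyc z) = (fun t : Fin r => propClass (u ^ (t : ℕ) * z)) '' Set.univ := by
        ext P
        simp only [classesOf, cyc, Set.mem_setOf_eq, Set.image_univ, Set.mem_range]
        constructor
        · rintro ⟨w, ⟨j, rfl⟩, rfl⟩
          refine ⟨⟨j % r, Nat.mod_lt _ hr0⟩, ?_⟩
          exact (hclass_eq _ _ (Nat.mod_modEq j r))
        · rintro ⟨t, rfl⟩
          exact ⟨u ^ (t : ℕ) * z, ⟨(t : ℕ), rfl⟩, rfl⟩
      rw [himg, Set.ncard_image_of_injective _ hinj, Set.ncard_univ, Nat.card_eq_fintype_card,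
        Fintype.card_fin]
    · -- each class meets the cycle in d elements
      intro w hw
      obtain ⟨k, rfl⟩ := hw
      have hinj2 : Function.Injective (fun t : Fin d => u ^ (k + r * (t : ℕ)) * z) := by
        intro t t' htt
        simp only at htt
        have h1 : k + r * (t : ℕ) ≡ k + r * (t' : ℕ) [MOD n] := (hperiod _ _).mp htt
        have h2 : r * (t : ℕ) ≡ r * (t' : ℕ) [MOD r * d] := by
          rw [hnrd]; exact h1.add_left_cancel' k
        have h3 : (t : ℕ) ≡ (t' : ℕ) [MOD d] := Nat.ModEq.mul_left_cancel' hr0.ne' h2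
        exact Fin.ext (by rw [← Nat.mod_eq_of_lt t.isLt, ← Nat.mod_eq_of_lt t'.isLt]; exact h3)
      have himg2 : propClass (u ^ k * z) ∩ cyc z =
          (fun t : Fin d => u ^ (k + r * (t : ℕ)) * z) '' Set.univ := by
        ext v
        simp only [propClass, cyc, Set.mem_inter_iff, Set.mem_setOf_eq, Set.image_univ,
          Set.mem_range]
        constructor
        · rintro ⟨hvp, j, rfl⟩
          have hjk : j ≡ k [MOD r] := (hRel j k).mp hvp
          obtain ⟨t0, ht0⟩ := (aux_mod r n j k hn0 hrn).mpr hjk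
          refine ⟨⟨t0 % d, Nat.mod_lt _ hd0⟩, ?_⟩
          apply (hperiod _ _).mpr
          have e1 : r * (t0 % d) ≡ r * t0 [MOD r * d] := Nat.ModEq.mul_left' _ (Nat.mod_modEq t0 d)
          have e2 : k + r * (t0 % d) ≡ k + r * t0 [MOD n] := by
            rw [← hnrd]; exact e1.add_left k
          have e3 : k + r * t0 = j + k * n := by
            rw [← ht0]
            have h4 := hcn k
            omega
          have e4 : j + k * n ≡ j [MOD n] := by
            have h5 : k * n ≡ 0 [MOD n] := Nat.modEq_zero_iff_dvd.mpr ⟨k, mul_comm k n⟩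
            simpa using h5.add_left j
          exact e2.trans (e3 ▸ e4)
        · rintro ⟨t, rfl⟩
          refine ⟨?_, ⟨k + r * (t : ℕ), rfl⟩⟩
          apply hRelmem
          have h5 : r * (t : ℕ) ≡ 0 [MOD r] := Nat.modEq_zero_iff_dvd.mpr ⟨(t : ℕ), rfl⟩
          simpa using h5.add_left k
      rw [himg2, Set.ncard_image_of_injective _ hinj2, Set.ncard_univ, Nat.card_eq_fintype_card,
        Fintype.card_fin]
  · -- r ∣ R
    have hb : Module.Basis (Fin h.natDegree) F K := AdjoinRoot.powerBasisAux hmon.ne_zero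
    haveI : Finite K := Finite.of_equiv _ hb.equivFun.toEquiv.symm
    haveI : Fintype K := Fintype.ofFinite K
    have hcardK : Fintype.card K = q ^ m := by
      rw [Module.card_fintype hb, hcard, Fintype.card_fin, hdeg]
    have hβ0 : β ≠ 0 := hβunit.ne_zero
    have h1 : β ^ (q ^ m - 1) = 1 := by
      have := FiniteField.pow_card_sub_one_eq_one β hβ0
      rwa [hcardK] at this
    have hnqm : n ∣ q ^ m - 1 := (horder _).mp h1
    have hq1 : q - 1 ∣ q ^ m - 1 := by
      have := Nat.sub_dvd_pow_sub_pow q 1 m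
      simpa using this
    have hlcm : Nat.lcm (q - 1) n ∣ q ^ m - 1 := Nat.lcm_dvd hq1 hnqm
    have hlcm_eq : Nat.lcm (q - 1) n = (q - 1) * r := by
      rw [Nat.lcm, ← hd, hrdef, Nat.mul_div_assoc _ hdn]
    rw [hR, Nat.dvd_div_iff_mul_dvd hq1, ← hlcm_eq]
    exact hlcm

end CyclicCode
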